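/- For every a > 0, c > 0, b ≥ 0 and every real x₀ with −b/a ≤ x₀ < c/a, the function t ↦ t^{x₀}·ψ_{a,b,c}(t) is uniformly continuous and bounded on (0,∞). -/

import Mathlib

open MeasureTheory Set Filter Real Topology

/-- `ψ_{a,b,c}(t) = (Γ(b+c)/a) t^{b/a} (1 + t^{1/a})^{−b−c}`. -/
noncomputable def psiElem (a b c : ℝ) : ℝ → ℝ :=
  fun t => (Real.Gamma (b + c) / a) * t ^ (b / a) * (1 + t ^ (1 / a)) ^ (-b - c)

theorem stmt_16 (a b c : ℝ) (ha : 0 < a) (hc : 0 < c) (hb : 0 ≤ b)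
    (x₀ : ℝ) (hx₀ : -(b / a) ≤ x₀) (hx₀' : x₀ < c / a) :
    UniformContinuousOn (fun t : ℝ => t ^ x₀ * psiElem a b c t) (Set.Ioi (0 : ℝ)) ∧
    ∃ C : ℝ, ∀ t ∈ Set.Ioi (0 : ℝ), |t ^ x₀ * psiElem a b c t| ≤ C := by
  have ha' : a ≠ 0 := ne_of_gt ha
  set K : ℝ := Real.Gamma (b + c) / a with hK
  have hbc : 0 < b + c := by linarith
  have hKpos : 0 < K := div_pos (Real.Gamma_pos_of_pos hbc) ha
  set p : ℝ := x₀ + b / a with hp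
  have hp0 : 0 ≤ p := by rw [hp]; linarith
  set h : ℝ → ℝ := fun t => K * t ^ p * (1 + t ^ (1 / a)) ^ (-b - c) with hh
  have hbase : ∀ t : ℝ, 0 ≤ t → (0:ℝ) < 1 + t ^ (1 / a) := by
    intro t ht
    have : (0:ℝ) ≤ t ^ (1/a) := Real.rpow_nonneg ht _
    linarith
  -- key pointwise bound for t ≥ 0
  have hneg : a * x₀ - c < 0 := by
    nlinarith [(lt_div_iff₀ ha).mp hx₀']
  have key : ∀ t : ℝ, 0 ≤ t → h t ≤ K * (1 + t ^ (1/a)) ^ (a * x₀ - c) := by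
    intro t ht
    have hB : (0:ℝ) < 1 + t ^ (1/a) := hbase t ht
    have h1 : t ^ p = (t ^ (1/a)) ^ (a * p) := by
      rw [← Real.rpow_mul ht]
      congr 1
      field_simp
    have h2 : t ^ p ≤ (1 + t ^ (1/a)) ^ (a * p) := by
      rw [h1]
      exact Real.rpow_le_rpow (Real.rpow_nonneg ht _) (by linarith [Real.rpow_nonneg ht (1/a)])
        (by positivity)
    have h3 : (1 + t ^ (1/a)) ^ (a * p) * (1 + t ^ (1/a)) ^ (-b - c)
        = (1 + t ^ (1/a)) ^ (a * x₀ - c) := by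
      rw [← Real.rpow_add hB]
      congr 1
      field_simp [hp]
      have hab : a * (b / a) = b := by field_simp
      linear_combination a * hp + hab
    calc h t = K * (t ^ p * (1 + t ^ (1/a)) ^ (-b - c)) := by rw [hh]; ring
      _ ≤ K * ((1 + t ^ (1/a)) ^ (a * p) * (1 + t ^ (1/a)) ^ (-b - c)) := by
          apply mul_le_mul_of_nonneg_left _ hKpos.le
          exact mul_le_mul_of_nonneg_right h2 (Real.rpow_nonneg hB.le _)
      _ = K * (1 + t ^ (1/a)) ^ (a * x₀ - c) := by rw [h3]
  have hnn : ∀ t : ℝ, 0 ≤ t → 0 ≤ h t := by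
    intro t ht
    have hB := hbase t ht
    have := Real.rpow_nonneg ht p
    have := Real.rpow_nonneg hB.le (-b - c)
    positivity
  -- continuity of h ∘ |·|
  set g : ℝ → ℝ := fun t => h |t| with hg
  have hcont : Continuous g := by
    apply Continuous.mul
    · exact (continuous_const.mul (continuous_abs.rpow_const fun x => Or.inr hp0))
    · apply Continuous.rpow_const
      · exact continuous_const.add (continuous_abs.rpow_const fun x => Or.inr (by positivity))
      · intro x
        exact Or.inl (ne_of_gt (hbase |x| (abs_nonneg x)))
  -- h tends to 0 at atTop
  have htop : Tendsto h atTop (𝓝 0) := by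
    have hBtop : Tendsto (fun t : ℝ => 1 + t ^ (1/a)) atTop atTop :=
      tendsto_atTop_add_const_left _ 1 (tendsto_rpow_atTop (by positivity))
    have hub : Tendsto (fun t : ℝ => K * (1 + t ^ (1/a)) ^ (a * x₀ - c)) atTop (𝓝 (K * 0)) := by
      apply Tendsto.const_mul
      have : Tendsto (fun u : ℝ => u ^ (a * x₀ - c)) atTop (𝓝 0) := by
        have := tendsto_rpow_neg_atTop (y := -(a * x₀ - c)) (by linarith)
        simpa using this
      exact this.comp hBtop
    have hub' : Tendsto (fun t : ℝ => K * (1 + t ^ (1/a)) ^ (a * x₀ - c)) atTop (𝓝 0) := by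
      simpa using hub
    apply tendsto_of_tendsto_of_tendsto_of_le_of_le' tendsto_const_nhds hub'
    · filter_upwards [eventually_ge_atTop (0:ℝ)] with t ht using hnn t ht
    · filter_upwards [eventually_ge_atTop (0:ℝ)] with t ht using key t ht
  have hgcc : Tendsto g (cocompact ℝ) (𝓝 0) := by
    rw [cocompact_eq_atBot_atTop, tendsto_sup]
    constructor
    · exact htop.comp tendsto_abs_atBot_atTop
    · exact htop.comp tendsto_abs_atTop_atTop
  have hgu : UniformContinuous g := hcont.uniformContinuous_of_tendsto_cocompact hgcc
  -- f = g on Ioi 0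
  have heq : ∀ t : ℝ, t ∈ Set.Ioi (0:ℝ) → t ^ x₀ * psiElem a b c t = g t := by
    intro t ht
    have ht' : (0:ℝ) < t := ht
    rw [hg]
    simp only [abs_of_pos ht', hh, psiElem, hp]
    rw [Real.rpow_add ht']
    ring
  constructor
  · rw [uniformContinuousOn_iff_restrict]
    have : (Set.Ioi (0:ℝ)).restrict (fun t : ℝ => t ^ x₀ * psiElem a b c t)
        = (Set.Ioi (0:ℝ)).restrict g := by
      funext x
      exact heq x x.2
    change UniformContinuous ((Set.Ioi (0:ℝ)).restrict (fun t : ℝ => t ^ x₀ * psiElem a b c t))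
    rw [this]
    exact hgu.comp uniformContinuous_subtype_val
  · refine ⟨K, fun t ht => ?_⟩
    have ht' : (0:ℝ) < t := ht
    rw [heq t ht]
    have hgt : g t = h t := by rw [hg]; simp [abs_of_pos ht']
    rw [hgt, abs_of_nonneg (hnn t ht'.le)]
    calc h t ≤ K * (1 + t ^ (1/a)) ^ (a * x₀ - c) := key t ht'.le
      _ ≤ K * 1 := by
          apply mul_le_mul_of_nonneg_left _ hKpos.le
          apply Real.rpow_le_one_of_one_le_of_nonpos
          · have := Real.rpow_nonneg ht'.le (1/a); linarith
          · linarith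
      _ = K := mul_one K
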